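/- In the 'if' direction of Theorem 5: with prices d(z₁) = M and for each i, d assigning M−1 to the element of {vᵗᵢ, vᶠᵢ} matching α(aᵢ) and M to the other, the explicit solution X = {h̄₁, h₂, z₁, z̄₂} ∪ ⋃ᵢ{v̄ᵒᵢ} ∪ ⋃_{α(aᵢ)=1}{vᵗᵢ, v̄ᶠᵢ, aᵢ} ∪ ⋃_{α(aᵢ)=0}{v̄ᵗᵢ, vᶠᵢ, āᵢ} (completed on the b-variables arbitrarily) is a satisfying solution of the constructed CNF formula, achieves follower value p(X) − d(X) = n, and yields leader value d(X) = (n+1)M − n = k⋆. -/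
import Mathlib


/-- Variables of the SAT-pricing instance of Theorem 5. -/
inductive GVar (n : ℕ) : Type where
  | h1 | h2 | z1 | z2
  | vt (i : Fin n) | vf (i : Fin n) | vo (i : Fin n)
  | va (i : Fin n) | vb (i : Fin n)
  deriving DecidableEq, Fintype

/-- Leader elements: the positive literals z₁, vᵗᵢ, vᶠᵢ. -/
def GVar.isLeader {n : ℕ} : GVar n → Bool
  | .z1 => true
  | .vt _ => true
  | .vf _ => true
  | _ => false

/-- Profits on positive literals, with M = 2n. -/
def gProfit (n : ℕ) : GVar n → ℕ
  | .z1 => 2 * n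
  | .vt _ => 2 * n
  | .vf _ => 2 * n
  | .vo _ => 1
  | .h1 => n
  | .z2 => 1
  | .h2 => 0
  | .va _ => 0
  | .vb _ => 0

/-- Satisfying assignments of the constructed CNF formula of Theorem 5,
where `φ` is the given DNF formula on variables A, B. -/
def SatAssign (n : ℕ) (φ : (Fin n → Bool) → (Fin n → Bool) → Bool)
    (σ : GVar n → Bool) : Prop :=
  (σ .h1 = true ∨ σ .h2 = true) ∧
  (σ .h1 = true → ∀ v : GVar n, v ≠ .h1 → σ v = false) ∧
  (σ .h2 = true → σ .z1 ≠ σ .z2) ∧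
  (σ .h2 = true → σ .z2 = true →
      φ (fun i => σ (.va i)) (fun i => σ (.vb i)) = false) ∧
  (σ .h2 = true → ∀ i : Fin n,
    ((σ (.vt i) = true ∨ σ (.vf i) = true ∨ σ (.vo i) = true) ∧
     ¬(σ (.vt i) = true ∧ σ (.vf i) = true) ∧
     ¬(σ (.vt i) = true ∧ σ (.vo i) = true) ∧
     ¬(σ (.vf i) = true ∧ σ (.vo i) = true)) ∧
    (σ (.vt i) = true → σ (.va i) = true) ∧
    (σ (.vf i) = true → σ (.va i) = false) ∧
    (σ (.vo i) = true → σ .z1 = true))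

/-- Gross profit p(X) of the selected positive literals. -/
noncomputable def grossProfit (n : ℕ) (σ : GVar n → Bool) : ℝ :=
  ∑ v ∈ Finset.univ.filter (fun v => σ v = true), (gProfit n v : ℝ)

/-- Leader value d(X ∩ U_L): prices collected on selected leader literals. -/
noncomputable def leaderValue (n : ℕ) (d : GVar n → ℝ) (σ : GVar n → Bool) : ℝ :=
  ∑ v ∈ Finset.univ.filter (fun v => σ v = true ∧ v.isLeader = true), d v

/-- Follower's objective p(X) − d(X ∩ U_L). -/
noncomputable def followerValue (n : ℕ) (d : GVar n → ℝ) (σ : GVar n → Bool) : ℝ :=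
  grossProfit n σ - leaderValue n d σ

/-- The explicit follower solution of the 'if' direction of Theorem 5. -/
def sigma18 (n : ℕ) (α β : Fin n → Bool) : GVar n → Bool
  | .h1 => false
  | .h2 => true
  | .z1 => true
  | .z2 => false
  | .vt i => α i
  | .vf i => !(α i)
  | .vo _ => false
  | .va i => α i
  | .vb i => β i


def gEquiv (n : ℕ) : GVar n ≃ (Unit ⊕ Unit ⊕ Unit ⊕ Unit ⊕ Fin n ⊕ Fin n ⊕ Fin n ⊕ Fin n ⊕ Fin n) where
  toFun v := match v with
    | .h1 => Sum.inl ()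
    | .h2 => Sum.inr (Sum.inl ())
    | .z1 => Sum.inr (Sum.inr (Sum.inl ()))
    | .z2 => Sum.inr (Sum.inr (Sum.inr (Sum.inl ())))
    | .vt i => Sum.inr (Sum.inr (Sum.inr (Sum.inr (Sum.inl i))))
    | .vf i => Sum.inr (Sum.inr (Sum.inr (Sum.inr (Sum.inr (Sum.inl i)))))
    | .vo i => Sum.inr (Sum.inr (Sum.inr (Sum.inr (Sum.inr (Sum.inr (Sum.inl i))))))
    | .va i => Sum.inr (Sum.inr (Sum.inr (Sum.inr (Sum.inr (Sum.inr (Sum.inr (Sum.inl i)))))))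
    | .vb i => Sum.inr (Sum.inr (Sum.inr (Sum.inr (Sum.inr (Sum.inr (Sum.inr (Sum.inr i)))))))
  invFun x := match x with
    | Sum.inl () => .h1
    | Sum.inr (Sum.inl ()) => .h2
    | Sum.inr (Sum.inr (Sum.inl ())) => .z1
    | Sum.inr (Sum.inr (Sum.inr (Sum.inl ()))) => .z2
    | Sum.inr (Sum.inr (Sum.inr (Sum.inr (Sum.inl i)))) => .vt i
    | Sum.inr (Sum.inr (Sum.inr (Sum.inr (Sum.inr (Sum.inl i))))) => .vf i
    | Sum.inr (Sum.inr (Sum.inr (Sum.inr (Sum.inr (Sum.inr (Sum.inl i)))))) => .vo i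
    | Sum.inr (Sum.inr (Sum.inr (Sum.inr (Sum.inr (Sum.inr (Sum.inr (Sum.inl i))))))) => .va i
    | Sum.inr (Sum.inr (Sum.inr (Sum.inr (Sum.inr (Sum.inr (Sum.inr (Sum.inr i))))))) => .vb i
  left_inv v := by cases v <;> rfl
  right_inv x := by rcases x with ⟨⟩|⟨⟩|⟨⟩|⟨⟩|i|i|i|i|i <;> rfl

lemma sum_gvar {n : ℕ} (f : GVar n → ℝ) :
    ∑ v, f v = f .h1 + f .h2 + f .z1 + f .z2 + ∑ i, f (.vt i) + ∑ i, f (.vf i)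
      + ∑ i, f (.vo i) + ∑ i, f (.va i) + ∑ i, f (.vb i) := by
  rw [← Equiv.sum_comp (gEquiv n).symm f]
  simp [Fintype.sum_sum_type, gEquiv]
  ring

/-- with the prices of Statement 4, the explicit solution X
is satisfying, achieves follower value n and leader value (n+1)M − n = k⋆. -/
theorem stmt18 (n : ℕ) (φ : (Fin n → Bool) → (Fin n → Bool) → Bool)
    (α : Fin n → Bool) (hα : ∀ β : Fin n → Bool, φ α β = true)
    (β : Fin n → Bool)
    (d : GVar n → ℝ)
    (hdz1 : d .z1 = (2 * n : ℝ))
    (hdt : ∀ i : Fin n, d (.vt i) = if α i then (2 * n - 1 : ℝ) else (2 * n : ℝ))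
    (hdf : ∀ i : Fin n, d (.vf i) = if α i then (2 * n : ℝ) else (2 * n - 1 : ℝ)) :
    SatAssign n φ (sigma18 n α β) ∧
    followerValue n d (sigma18 n α β) = (n : ℝ) ∧
    leaderValue n d (sigma18 n α β) = ((n : ℝ) + 1) * (2 * n) - n := by
  refine ⟨?_, ?_, ?_⟩
  · refine ⟨Or.inr rfl, by simp [sigma18], by simp [sigma18], by simp [sigma18], ?_⟩
    intro _ i
    simp only [sigma18]
    rcases h : α i with _ | _ <;> simp
  · unfold followerValue grossProfit leaderValue
    rw [Finset.sum_filter, Finset.sum_filter, sum_gvar, sum_gvar]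
    simp only [sigma18, GVar.isLeader, gProfit, hdz1, and_true, and_false, false_and, if_true, if_false,
      Finset.sum_const_zero, add_zero, zero_add]
    simp only [Bool.false_eq_true, false_and, and_false, if_false, Finset.sum_const_zero,
      add_zero, zero_add]
    have key : ∀ g : Fin n → ℝ,
        ((∑ x : Fin n, if α x = true then g x else 0)
          + ∑ x : Fin n, if (!α x) = true then g x else 0) = ∑ x : Fin n, g x := by
      intro g
      rw [← Finset.sum_add_distrib]
      refine Finset.sum_congr rfl fun x _ => ?_
      cases h : α x <;> simp [h]
    have e2 : (∑ x : Fin n, if α x = true then d (GVar.vt x) else 0)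
        = ∑ x : Fin n, if α x = true then (2*(n:ℝ)-1) else 0 :=
      Finset.sum_congr rfl fun x _ => by rw [hdt]; cases h : α x <;> simp [h]
    have e3 : (∑ x : Fin n, if (!α x) = true then d (GVar.vf x) else 0)
        = ∑ x : Fin n, if (!α x) = true then (2*(n:ℝ)-1) else 0 :=
      Finset.sum_congr rfl fun x _ => by rw [hdf]; cases h : α x <;> simp [h]
    have E1 : ((∑ x : Fin n, if α x = true then ((2*n : ℕ) : ℝ) else 0)
          + ∑ x : Fin n, if (!α x) = true then ((2*n : ℕ) : ℝ) else 0) = (n:ℝ)*(2*n) := by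
      rw [key]; simp [Finset.sum_const]; try push_cast; try ring
    have E2 : ((∑ x : Fin n, if α x = true then (2*(n:ℝ)-1) else 0)
          + ∑ x : Fin n, if (!α x) = true then (2*(n:ℝ)-1) else 0) = (n:ℝ)*(2*n-1) := by
      rw [key]; simp [Finset.sum_const]; try push_cast; try ring
    rw [e2, e3]
    try simp only [ite_self, Finset.sum_const_zero, Nat.cast_zero, add_zero, zero_add]
    push_cast at E1 E2 ⊢
    linarith
  · unfold leaderValue
    rw [Finset.sum_filter, sum_gvar]
    simp only [sigma18, GVar.isLeader, hdz1, and_true, and_false, false_and, if_true, if_false,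
      Finset.sum_const_zero, add_zero, zero_add]
    simp only [Bool.false_eq_true, false_and, and_false, if_false, Finset.sum_const_zero,
      add_zero, zero_add]
    have key : ∀ g : Fin n → ℝ,
        ((∑ x : Fin n, if α x = true then g x else 0)
          + ∑ x : Fin n, if (!α x) = true then g x else 0) = ∑ x : Fin n, g x := by
      intro g
      rw [← Finset.sum_add_distrib]
      refine Finset.sum_congr rfl fun x _ => ?_
      cases h : α x <;> simp [h]
    have e2 : (∑ x : Fin n, if α x = true then d (GVar.vt x) else 0)
        = ∑ x : Fin n, if α x = true then (2*(n:ℝ)-1) else 0 :=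
      Finset.sum_congr rfl fun x _ => by rw [hdt]; cases h : α x <;> simp [h]
    have e3 : (∑ x : Fin n, if (!α x) = true then d (GVar.vf x) else 0)
        = ∑ x : Fin n, if (!α x) = true then (2*(n:ℝ)-1) else 0 :=
      Finset.sum_congr rfl fun x _ => by rw [hdf]; cases h : α x <;> simp [h]
    have E2 : ((∑ x : Fin n, if α x = true then (2*(n:ℝ)-1) else 0)
          + ∑ x : Fin n, if (!α x) = true then (2*(n:ℝ)-1) else 0) = (n:ℝ)*(2*n-1) := by
      rw [key]; simp [Finset.sum_const]; try push_cast; try ring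
    rw [e2, e3]
    try simp only [ite_self, Finset.sum_const_zero, add_zero, zero_add]
    push_cast at E2 ⊢
    linarith
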